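/- arXiv:1109.1054 — 2 statements merged into one kernel-verified Lean document; each statement's English description precedes it below -/
import Mathlib

section
/- Let q be a real number with q > 1 (or a formal parameter), and define rational numbers A_ν for ν ∈ ℕ by: A_0 = 1; for ν ≥ 1, A_ν = q^(−ν) + [ν even]·q^(−3ν/2) + (1 − q^(−2)) · ∑_{0 < a < b, a+b=ν} q^(−(2a+b)), where [ν even] is 1 if ν is even and 0 otherwise. Then in ℝ[[X]] one has the identity (1 − q^(−1)X)·(1 − q^(−3)X²) · ∑_{ν ≥ 0} A_ν X^ν = 1 − q^(−6) X³. -/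
open PowerSeries Finset

/-- Reindex the pair sum as a sum over the smaller index. -/
lemma A_star_sum_reindex (q : ℝ) (ν : ℕ) :
    ∑ p ∈ (range (ν + 1) ×ˢ range (ν + 1)).filter
        (fun p => 0 < p.1 ∧ p.1 < p.2 ∧ p.1 + p.2 = ν),
      (q ^ (2 * p.1 + p.2))⁻¹ = ∑ a ∈ Ico 1 ((ν + 1) / 2), (q ^ (ν + a))⁻¹ := by
  have hset : (range (ν + 1) ×ˢ range (ν + 1)).filter
      (fun p => 0 < p.1 ∧ p.1 < p.2 ∧ p.1 + p.2 = ν)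
      = (Ico 1 ((ν + 1) / 2)).image (fun a => (a, ν - a)) := by
    ext p
    simp only [mem_filter, mem_product, mem_range, mem_image, mem_Ico, Prod.ext_iff]
    constructor
    · rintro ⟨⟨h1, h2⟩, h3, h4, h5⟩
      exact ⟨p.1, ⟨by omega, by omega⟩, rfl, by omega⟩
    · rintro ⟨a, ⟨ha1, ha2⟩, h1, h2⟩
      omega
  rw [hset, Finset.sum_image (by intro a _ b _ h; exact (Prod.ext_iff.mp h).1)]
  refine Finset.sum_congr rfl fun a ha => ?_
  simp only [mem_Ico] at ha
  congr 2
  omega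

/-- Closed form for `A ν`, `ν ≥ 1`. -/
lemma A_star_closed (q : ℝ) (hq : 1 < q) (A : ℕ → ℝ)
    (hA : ∀ ν : ℕ, 1 ≤ ν → A ν =
      (q ^ ν)⁻¹ + (if Even ν then (q ^ (3 * ν / 2))⁻¹ else 0) +
        (1 - (q ^ 2)⁻¹) *
          ∑ p ∈ (range (ν + 1) ×ˢ range (ν + 1)).filter
              (fun p => 0 < p.1 ∧ p.1 < p.2 ∧ p.1 + p.2 = ν),
            (q ^ (2 * p.1 + p.2))⁻¹)
    (ν : ℕ) (hν : 1 ≤ ν) :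
    A ν = q⁻¹ ^ ν + (if Even ν then q⁻¹ ^ (3 * ν / 2) else 0) +
      (q⁻¹ + q⁻¹ ^ 2) * (q⁻¹ ^ ν - q⁻¹ ^ (ν + (ν - 1) / 2)) := by
  have hq0 : q ≠ 0 := by positivity
  have ht1 : q⁻¹ ≠ 1 := by
    intro h
    have : q = 1 := by field_simp at h; linarith
    linarith
  rw [hA ν hν, A_star_sum_reindex]
  have hm : (ν + 1) / 2 = (ν - 1) / 2 + 1 := by omega
  rw [hm]
  simp only [← inv_pow]
  have hsum : ∑ a ∈ Ico 1 ((ν - 1) / 2 + 1), q⁻¹ ^ (ν + a)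
      = q⁻¹ ^ ν * ((q⁻¹ ^ ((ν - 1) / 2 + 1) - q⁻¹ ^ 1) / (q⁻¹ - 1)) := by
    rw [← geom_sum_Ico ht1 (by omega)]
    rw [Finset.mul_sum]
    exact Finset.sum_congr rfl fun a _ => by rw [pow_add]
  rw [hsum]
  have hne : q⁻¹ - 1 ≠ 0 := sub_ne_zero.mpr ht1
  congr 1
  rw [pow_add q⁻¹ ν ((ν - 1) / 2), pow_succ q⁻¹ ((ν - 1) / 2)]
  generalize q⁻¹ ^ ((ν - 1) / 2) = z
  generalize q⁻¹ ^ ν = w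
  have h1q : 1 - q ≠ 0 := by intro h; linarith
  field_simp
  ring

/-- The three-term recurrence for `A`. -/
lemma A_star_rec (q : ℝ) (hq : 1 < q) (A : ℕ → ℝ)
    (hA : ∀ ν : ℕ, 1 ≤ ν → A ν =
      (q ^ ν)⁻¹ + (if Even ν then (q ^ (3 * ν / 2))⁻¹ else 0) +
        (1 - (q ^ 2)⁻¹) *
          ∑ p ∈ (range (ν + 1) ×ˢ range (ν + 1)).filter
              (fun p => 0 < p.1 ∧ p.1 < p.2 ∧ p.1 + p.2 = ν),
            (q ^ (2 * p.1 + p.2))⁻¹)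
    (n : ℕ) (hn : 4 ≤ n) :
    A n = q⁻¹ * A (n - 1) + q⁻¹ ^ 3 * A (n - 2) - q⁻¹ ^ 4 * A (n - 3) := by
  have C := A_star_closed q hq A hA
  rcases Nat.even_or_odd n with ⟨k, hk⟩ | ⟨k, hk⟩
  · -- n = 2k, k ≥ 2
    have hk2 : 2 ≤ k := by omega
    rw [C n (by omega), C (n-1) (by omega), C (n-2) (by omega), C (n-3) (by omega)]
    have e0 : Even n := by rw [Nat.even_iff]; omega
    have e1 : ¬ Even (n - 1) := by rw [Nat.even_iff]; omega
    have e2 : Even (n - 2) := by rw [Nat.even_iff]; omega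
    have e3 : ¬ Even (n - 3) := by rw [Nat.even_iff]; omega
    rw [if_pos e0, if_neg e1, if_pos e2, if_neg e3]
    set y := q⁻¹ ^ (k - 2) with hy
    have p1 : q⁻¹ ^ n = q⁻¹ ^ 4 * y ^ 2 := by
      rw [hy, ← pow_mul, ← pow_add]; congr 1; omega
    have p2 : q⁻¹ ^ (3 * n / 2) = q⁻¹ ^ 6 * y ^ 3 := by
      rw [hy, ← pow_mul, ← pow_add]; congr 1; omega
    have p3 : q⁻¹ ^ (n + (n - 1) / 2) = q⁻¹ ^ 5 * y ^ 3 := by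
      rw [hy, ← pow_mul, ← pow_add]; congr 1; omega
    have p4 : q⁻¹ ^ (n - 1) = q⁻¹ ^ 3 * y ^ 2 := by
      rw [hy, ← pow_mul, ← pow_add]; congr 1; omega
    have p5 : q⁻¹ ^ (n - 1 + (n - 1 - 1) / 2) = q⁻¹ ^ 4 * y ^ 3 := by
      rw [hy, ← pow_mul, ← pow_add]; congr 1; omega
    have p6 : q⁻¹ ^ (n - 2) = q⁻¹ ^ 2 * y ^ 2 := by
      rw [hy, ← pow_mul, ← pow_add]; congr 1; omega
    have p7 : q⁻¹ ^ (3 * (n - 2) / 2) = q⁻¹ ^ 3 * y ^ 3 := by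
      rw [hy, ← pow_mul, ← pow_add]; congr 1; omega
    have p8 : q⁻¹ ^ (n - 2 + (n - 2 - 1) / 2) = q⁻¹ ^ 2 * y ^ 3 := by
      rw [hy, ← pow_mul, ← pow_add]; congr 1; omega
    have p9 : q⁻¹ ^ (n - 3) = q⁻¹ ^ 1 * y ^ 2 := by
      rw [hy, ← pow_mul, ← pow_add]; congr 1; omega
    have p10 : q⁻¹ ^ (n - 3 + (n - 3 - 1) / 2) = q⁻¹ ^ 1 * y ^ 3 := by
      rw [hy, ← pow_mul, ← pow_add]; congr 1; omega
    rw [p1, p2, p3, p4, p5, p6, p7, p8, p9, p10]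
    ring
  · -- n = 2k+1, k ≥ 2
    have hk2 : 2 ≤ k := by omega
    rw [C n (by omega), C (n-1) (by omega), C (n-2) (by omega), C (n-3) (by omega)]
    have e0 : ¬ Even n := by rw [Nat.even_iff]; omega
    have e1 : Even (n - 1) := by rw [Nat.even_iff]; omega
    have e2 : ¬ Even (n - 2) := by rw [Nat.even_iff]; omega
    have e3 : Even (n - 3) := by rw [Nat.even_iff]; omega
    rw [if_neg e0, if_pos e1, if_neg e2, if_pos e3]
    set y := q⁻¹ ^ (k - 2) with hy
    have p1 : q⁻¹ ^ n = q⁻¹ ^ 5 * y ^ 2 := by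
      rw [hy, ← pow_mul, ← pow_add]; congr 1; omega
    have p3 : q⁻¹ ^ (n + (n - 1) / 2) = q⁻¹ ^ 7 * y ^ 3 := by
      rw [hy, ← pow_mul, ← pow_add]; congr 1; omega
    have p4 : q⁻¹ ^ (n - 1) = q⁻¹ ^ 4 * y ^ 2 := by
      rw [hy, ← pow_mul, ← pow_add]; congr 1; omega
    have p4' : q⁻¹ ^ (3 * (n - 1) / 2) = q⁻¹ ^ 6 * y ^ 3 := by
      rw [hy, ← pow_mul, ← pow_add]; congr 1; omega
    have p5 : q⁻¹ ^ (n - 1 + (n - 1 - 1) / 2) = q⁻¹ ^ 5 * y ^ 3 := by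
      rw [hy, ← pow_mul, ← pow_add]; congr 1; omega
    have p6 : q⁻¹ ^ (n - 2) = q⁻¹ ^ 3 * y ^ 2 := by
      rw [hy, ← pow_mul, ← pow_add]; congr 1; omega
    have p8 : q⁻¹ ^ (n - 2 + (n - 2 - 1) / 2) = q⁻¹ ^ 4 * y ^ 3 := by
      rw [hy, ← pow_mul, ← pow_add]; congr 1; omega
    have p9 : q⁻¹ ^ (n - 3) = q⁻¹ ^ 2 * y ^ 2 := by
      rw [hy, ← pow_mul, ← pow_add]; congr 1; omega
    have p9' : q⁻¹ ^ (3 * (n - 3) / 2) = q⁻¹ ^ 3 * y ^ 3 := by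
      rw [hy, ← pow_mul, ← pow_add]; congr 1; omega
    have p10 : q⁻¹ ^ (n - 3 + (n - 3 - 1) / 2) = q⁻¹ ^ 2 * y ^ 3 := by
      rw [hy, ← pow_mul, ← pow_add]; congr 1; omega
    rw [p1, p3, p4, p4', p5, p6, p8, p9, p9', p10]
    ring

/-- The generating function of the local masses A*_{p;n=3} at an odd prime with
residue field size q satisfies
`(1 − q⁻¹X)(1 − q⁻³X²) ∑ A_ν X^ν = 1 − q⁻⁶X³`. -/
theorem A_star_euler_factor (q : ℝ) (hq : 1 < q) (A : ℕ → ℝ)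
    (hA0 : A 0 = 1)
    (hA : ∀ ν : ℕ, 1 ≤ ν → A ν =
      (q ^ ν)⁻¹ + (if Even ν then (q ^ (3 * ν / 2))⁻¹ else 0) +
        (1 - (q ^ 2)⁻¹) *
          ∑ p ∈ (range (ν + 1) ×ˢ range (ν + 1)).filter
              (fun p => 0 < p.1 ∧ p.1 < p.2 ∧ p.1 + p.2 = ν),
            (q ^ (2 * p.1 + p.2))⁻¹) :
    (1 - PowerSeries.C q⁻¹ * PowerSeries.X) *
      (1 - PowerSeries.C (q⁻¹ ^ 3) * PowerSeries.X ^ 2) * PowerSeries.mk A =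
    1 - PowerSeries.C (q⁻¹ ^ 6) * PowerSeries.X ^ 3 := by
  have hC : (PowerSeries.C q⁻¹) * (PowerSeries.C (q⁻¹ ^ 3)) = PowerSeries.C (q⁻¹ ^ 4) := by
    rw [← map_mul]; ring_nf
  have expand : (1 - PowerSeries.C q⁻¹ * PowerSeries.X) *
      (1 - PowerSeries.C (q⁻¹ ^ 3) * PowerSeries.X ^ 2)
      = 1 - PowerSeries.C q⁻¹ * PowerSeries.X ^ 1
        - PowerSeries.C (q⁻¹ ^ 3) * PowerSeries.X ^ 2
        + PowerSeries.C (q⁻¹ ^ 4) * PowerSeries.X ^ 3 := by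
    rw [← hC]; ring
  rw [expand]
  ext n
  simp only [sub_mul, add_mul, one_mul, map_sub, map_add, mul_assoc, coeff_C_mul,
    coeff_X_pow_mul', coeff_mk, PowerSeries.coeff_one, coeff_X_pow, mul_ite, mul_one, mul_zero]
  -- values of A at 1, 2, 3
  have CF := A_star_closed q hq A hA
  have hA1 : A 1 = q⁻¹ := by rw [CF 1 le_rfl]; norm_num [Nat.even_iff]
  have hA2 : A 2 = q⁻¹ ^ 2 + q⁻¹ ^ 3 := by rw [CF 2 (by norm_num)]; norm_num [Nat.even_iff]
  have hA3 : A 3 = q⁻¹ ^ 3 + q⁻¹ ^ 4 - q⁻¹ ^ 6 := by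
    rw [CF 3 (by norm_num)]; norm_num [Nat.even_iff]; ring
  match n with
  | 0 => simp [hA0]
  | 1 => simp [hA1, hA0]
  | 2 => simp [hA2, hA1, hA0]; ring
  | 3 => simp [hA3, hA2, hA1, hA0]; ring
  | (m + 4) =>
    have hrec := A_star_rec q hq A hA (m + 4) (by omega)
    simp only [show m + 4 - 1 = m + 3 from rfl, show m + 4 - 2 = m + 2 from rfl,
      show m + 4 - 3 = m + 1 from rfl] at hrec
    simp only [if_pos (by omega : 1 ≤ m + 4), if_pos (by omega : 2 ≤ m + 4),
      if_pos (by omega : 3 ≤ m + 4), if_neg (by omega : ¬ m + 4 = 0),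
      if_neg (by omega : ¬ m + 4 = 3)]
    simp only [show m + 4 - 1 = m + 3 from rfl, show m + 4 - 2 = m + 2 from rfl,
      show m + 4 - 3 = m + 1 from rfl]
    rw [hrec]; ring
end

section
/- Let q be a real number with q > 1 and let ε ∈ {1, −1}. Define rational numbers B_ν for ν ∈ ℕ by: B_0 = 1; for ν ≥ 1, B_ν = [ν even]·q^(−ν) + [ν odd]·ε·q^(−ν−1) + [4 ∣ ν]·q^(−3ν/2) + [ν ≡ 2 mod 4]·q^(−3ν/2 − 1) + (1 − q^(−2)) · ∑_{0 < a < b, a+b=ν, a,b both even} q^(−(2a+b)). Then in ℝ[[X]] one has (1 − q^(−2)X²) · ∑_{ν ≥ 0} B_ν X^ν = 1 + ε·q^(−2)X + q^(−4)X². -/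
open PowerSeries Finset

lemma sum_reindex (q : ℝ) (m : ℕ) :
    ∑ p ∈ (range (2*m + 1) ×ˢ range (2*m + 1)).filter
        (fun p => 0 < p.1 ∧ p.1 < p.2 ∧ p.1 + p.2 = 2*m ∧ Even p.1 ∧ Even p.2),
      (q ^ (2 * p.1 + p.2))⁻¹
    = ∑ j ∈ range ((m-1)/2), (q ^ (2*m + 2*j + 2))⁻¹ := by
  apply Finset.sum_nbij' (fun p => p.1/2 - 1) (fun j => (2*j+2, 2*m - (2*j+2)))
  · rintro ⟨a,b⟩ h
    simp only [mem_filter, mem_product, mem_range, Nat.even_iff] at h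
    simp only [mem_range]
    omega
  · intro j hj
    simp only [mem_range] at hj
    simp only [mem_filter, mem_product, mem_range, Nat.even_iff]
    omega
  · rintro ⟨a,b⟩ h
    simp only [mem_filter, mem_product, mem_range, Nat.even_iff] at h
    simp only [Prod.mk.injEq]
    omega
  · intro j hj
    simp only [mem_range] at hj
    omega
  · rintro ⟨a,b⟩ h
    simp only [mem_filter, mem_product, mem_range, Nat.even_iff] at h
    have : 2*a + b = 2*m + 2*(a/2 - 1) + 2 := by omega
    rw [this]

lemma geom_part (q : ℝ) (m t : ℕ) :
    (1 - (q^2)⁻¹) * ∑ j ∈ range t, (q ^ (2*m + 2*j + 2))⁻¹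
      = (q ^ (2*m+2))⁻¹ - (q ^ (2*m+2+2*t))⁻¹ := by
  simp only [← inv_pow]
  set x := q⁻¹ with hx
  have hterm : ∀ j, x ^ (2*m + 2*j + 2) = x ^ (2*m+2) * (x^2)^j := by
    intro j
    rw [← pow_mul, ← pow_add]
    congr 1
    omega
  simp only [hterm]
  rw [← Finset.mul_sum]
  have h1 : (1 - x^2) * ∑ j ∈ range t, (x^2)^j = 1 - (x^2)^t := by
    have := geom_sum_mul (x^2) t
    linarith [this]
  calc (1 - x^2) * (x ^ (2*m+2) * ∑ j ∈ range t, (x^2)^j)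
      = x ^ (2*m+2) * ((1 - x^2) * ∑ j ∈ range t, (x^2)^j) := by ring
    _ = x ^ (2*m+2) * (1 - (x^2)^t) := by rw [h1]
    _ = x ^ (2*m+2) - x ^ (2*m+2+2*t) := by
        rw [← pow_mul, pow_add]
        ring

lemma B_closed (q : ℝ) (ε : ℝ) (B : ℕ → ℝ)
    (hB : ∀ ν : ℕ, 1 ≤ ν → B ν =
      (if Even ν then (q ^ ν)⁻¹ else 0) +
      (if Odd ν then ε * (q ^ (ν + 1))⁻¹ else 0) +
      (if 4 ∣ ν then (q ^ (3 * ν / 2))⁻¹ else 0) +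
      (if ν % 4 = 2 then (q ^ (3 * ν / 2 + 1))⁻¹ else 0) +
        (1 - (q ^ 2)⁻¹) *
          ∑ p ∈ (range (ν + 1) ×ˢ range (ν + 1)).filter
              (fun p => 0 < p.1 ∧ p.1 < p.2 ∧ p.1 + p.2 = ν ∧ Even p.1 ∧ Even p.2),
            (q ^ (2 * p.1 + p.2))⁻¹) :
    ∀ ν : ℕ, 1 ≤ ν →
      B ν = if Even ν then (q ^ ν)⁻¹ + (q ^ (ν+2))⁻¹ else ε * (q ^ (ν + 1))⁻¹ := by
  intro ν hν
  rw [hB ν hν]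
  rcases Nat.even_or_odd ν with hev | hod
  · obtain ⟨m, rfl⟩ := hev
    rw [show m + m = 2*m from by omega] at hν ⊢
    have hm1 : 1 ≤ m := by omega
    rw [sum_reindex q m, geom_part q m ((m-1)/2)]
    simp only [Nat.even_iff, Nat.odd_iff]
    simp only [if_pos (show 2*m % 2 = 0 by omega), if_neg (show ¬ (2*m % 2 = 1) by omega)]
    rcases Nat.even_or_odd m with hm | hm
    · rw [Nat.even_iff] at hm
      rw [if_pos (show (4:ℕ) ∣ 2*m by omega), if_neg (show ¬ (2*m % 4 = 2) by omega)]
      rw [show 3*(2*m)/2 = 2*m+2+2*((m-1)/2) from by omega,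
          show 2*m+2 = 2*m+2 from rfl]
      ring
    · rw [Nat.odd_iff] at hm
      rw [if_neg (show ¬ (4:ℕ) ∣ 2*m by omega), if_pos (show 2*m % 4 = 2 by omega)]
      rw [show 3*(2*m)/2 + 1 = 2*m+2+2*((m-1)/2) from by omega]
      ring
  · rw [Nat.odd_iff] at hod
    have hempty : ((range (ν + 1) ×ˢ range (ν + 1)).filter
        (fun p => 0 < p.1 ∧ p.1 < p.2 ∧ p.1 + p.2 = ν ∧ Even p.1 ∧ Even p.2)) = ∅ := by
      apply Finset.filter_false_of_mem
      rintro ⟨a,b⟩ _ ⟨h1, h2, h3, h4, h5⟩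
      rw [Nat.even_iff] at h4 h5
      omega
    rw [hempty, Finset.sum_empty]
    simp only [Nat.even_iff, Nat.odd_iff]
    simp only [if_neg (show ¬ (ν % 2 = 0) by omega), if_pos hod,
      if_neg (show ¬ (4:ℕ) ∣ ν by omega), if_neg (show ¬ (ν % 4 = 2) by omega)]
    ring

/-- The generating function of the local masses B*_{p;n=3} at an odd prime with
residue field size q and ε = (−1/p) satisfies
`(1 − q⁻²X²) ∑ B_ν X^ν = 1 + ε·q⁻²X + q⁻⁴X²`. -/
theorem B_star_euler_factor (q : ℝ) (hq : 1 < q) (ε : ℝ) (hε : ε = 1 ∨ ε = -1)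
    (B : ℕ → ℝ) (hB0 : B 0 = 1)
    (hB : ∀ ν : ℕ, 1 ≤ ν → B ν =
      (if Even ν then (q ^ ν)⁻¹ else 0) +
      (if Odd ν then ε * (q ^ (ν + 1))⁻¹ else 0) +
      (if 4 ∣ ν then (q ^ (3 * ν / 2))⁻¹ else 0) +
      (if ν % 4 = 2 then (q ^ (3 * ν / 2 + 1))⁻¹ else 0) +
        (1 - (q ^ 2)⁻¹) *
          ∑ p ∈ (range (ν + 1) ×ˢ range (ν + 1)).filter
              (fun p => 0 < p.1 ∧ p.1 < p.2 ∧ p.1 + p.2 = ν ∧ Even p.1 ∧ Even p.2),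
            (q ^ (2 * p.1 + p.2))⁻¹) :
    (1 - PowerSeries.C (R := ℝ) (q⁻¹ ^ 2) * PowerSeries.X ^ 2) * PowerSeries.mk B =
      1 + PowerSeries.C (R := ℝ) (ε * q⁻¹ ^ 2) * PowerSeries.X +
        PowerSeries.C (R := ℝ) (q⁻¹ ^ 4) * PowerSeries.X ^ 2 := by
  have hC := B_closed q ε B hB
  ext n
  rw [sub_mul, one_mul, mul_assoc]
  simp only [map_sub, map_add, coeff_C_mul, coeff_mk, coeff_one, coeff_X, coeff_X_pow,
    coeff_X_pow_mul']
  match n with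
  | 0 => simp [hB0]
  | 1 =>
    rw [hC 1 (by omega)]
    norm_num [Nat.even_iff]
  | 2 =>
    rw [hC 2 (by omega)]
    norm_num [Nat.even_iff, hB0]
  | (k+3) =>
    rw [hC (k+3) (by omega)]
    rw [if_pos (show (2:ℕ) ≤ k + 3 by omega), show k+3-2 = k+1 from rfl,
      hC (k+1) (by omega)]
    rw [if_neg (show ¬ k+3 = 0 by omega), if_neg (show ¬ k+3 = 1 by omega),
      if_neg (show ¬ k+3 = 2 by omega)]
    simp only [Nat.even_iff]
    rcases Nat.even_or_odd (k+1) with h | h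
    · rw [Nat.even_iff] at h
      rw [if_pos (show (k+3) % 2 = 0 by omega), if_pos (show (k+1) % 2 = 0 by omega)]
      simp only [← inv_pow]
      ring
    · rw [Nat.odd_iff] at h
      rw [if_neg (show ¬ (k+3) % 2 = 0 by omega), if_neg (show ¬ (k+1) % 2 = 0 by omega)]
      simp only [← inv_pow]
      ring
end
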